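/- Let 𝔤 be a finite-dimensional Lie algebra over an infinite field 𝔽 that can be generated by two elements, let (ρ, V) be a representation of 𝔤 such that the trivial representation is not a subrepresentation of (ρ, V) (i.e., there is no nonzero v ∈ V with ρ(x)v = 0 for all x ∈ 𝔤), and let ψ : 𝔤 → V be a linear kernel vector. Then for every x, y ∈ 𝔤: ψ([x,y]) − ρ(x)ψ(y) = 0. -/

import Mathlib

attribute [local instance] LieRing.ofAssociativeRing

open Finset Polynomial

namespace LKVaux

variable {𝔽 : Type*} [Field 𝔽] {𝔤 : Type*} [LieRing 𝔤] [LieAlgebra 𝔽 𝔤]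

/-- evaluation of a free magma word on two elements of a Lie algebra -/
def wordEval : FreeMagma (Fin 2) → 𝔤 → 𝔤 → 𝔤
  | .of i, u, v => if i = 0 then u else v
  | .mul a b, u, v => ⁅wordEval a u v, wordEval b u v⁆

lemma lie_sum' {ι : Type*} (t : Finset ι) (x : 𝔤) (f : ι → 𝔤) :
    ⁅x, ∑ i ∈ t, f i⁆ = ∑ i ∈ t, ⁅x, f i⁆ := by
  induction t using Finset.cons_induction with
  | empty => simp
  | cons a t ha ih => rw [Finset.sum_cons, Finset.sum_cons, lie_add, ih]

lemma sum_lie' {ι : Type*} (t : Finset ι) (y : 𝔤) (f : ι → 𝔤) :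
    ⁅∑ i ∈ t, f i, y⁆ = ∑ i ∈ t, ⁅f i, y⁆ := by
  induction t using Finset.cons_induction with
  | empty => simp
  | cons a t ha ih => rw [Finset.sum_cons, Finset.sum_cons, add_lie, ih]

lemma span_wordEval_eq_top {x₀ y₀ : 𝔤} (h : LieSubalgebra.lieSpan 𝔽 𝔤 {x₀, y₀} = ⊤) :
    Submodule.span 𝔽 (Set.range fun m : FreeMagma (Fin 2) => wordEval m x₀ y₀) = ⊤ := by
  set p := Submodule.span 𝔽 (Set.range fun m : FreeMagma (Fin 2) => wordEval m x₀ y₀) with hp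
  have hrange : ∀ m : FreeMagma (Fin 2), wordEval m x₀ y₀ ∈ p :=
    fun m => Submodule.subset_span ⟨m, rfl⟩
  have step1 : ∀ (m : FreeMagma (Fin 2)), ∀ y ∈ p, ⁅wordEval m x₀ y₀, y⁆ ∈ p := by
    intro m
    have hle : p ≤ Submodule.comap (LieAlgebra.ad 𝔽 𝔤 (wordEval m x₀ y₀)) p := by
      rw [hp]
      refine Submodule.span_le.2 ?_
      rintro _ ⟨m', rfl⟩
      simp only [SetLike.mem_coe, Submodule.mem_comap, LieAlgebra.ad_apply]
      exact hrange (m.mul m')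
    intro y hy
    simpa only [Submodule.mem_comap, LieAlgebra.ad_apply] using hle hy
  have step2 : ∀ x ∈ p, ∀ y ∈ p, ⁅x, y⁆ ∈ p := by
    intro x hx y hy
    have hle : p ≤ Submodule.comap (-(LieAlgebra.ad 𝔽 𝔤 y)) p := by
      rw [hp]
      refine Submodule.span_le.2 ?_
      rintro _ ⟨m, rfl⟩
      simp only [SetLike.mem_coe, Submodule.mem_comap, LinearMap.neg_apply,
        LieAlgebra.ad_apply, lie_skew]
      exact step1 m y hy
    have h2 := hle hx
    rw [Submodule.mem_comap, LinearMap.neg_apply, LieAlgebra.ad_apply, lie_skew] at h2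
    exact h2
  let K : LieSubalgebra 𝔽 𝔤 := { p with lie_mem' := fun {x y} hx hy => step2 x hx y hy }
  have hK : LieSubalgebra.lieSpan 𝔽 𝔤 {x₀, y₀} ≤ K := by
    refine LieSubalgebra.lieSpan_le.2 ?_
    intro z hz
    rcases hz with rfl | hz
    · have h0 : wordEval (FreeMagma.of (0 : Fin 2)) z y₀ = z := by simp [wordEval]
      exact h0 ▸ hrange (FreeMagma.of 0)
    · rcases hz with rfl
      have h1 : wordEval (FreeMagma.of (1 : Fin 2)) x₀ z = z := by simp [wordEval]
      exact h1 ▸ hrange (FreeMagma.of 1)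
  rw [h] at hK
  refine top_unique ?_
  intro z _
  exact hK (LieSubalgebra.mem_top z)

variable {V : Type*} [AddCommGroup V] [Module 𝔽 V]

lemma annih (ρ : 𝔤 →ₗ⁅𝔽⁆ Module.End 𝔽 V) {w : V} {u v : 𝔤}
    (hu : ρ u w = 0) (hv : ρ v w = 0) : ∀ m : FreeMagma (Fin 2), ρ (wordEval m u v) w = 0 := by
  intro m
  induction m with
  | ih1 i =>
    by_cases h : i = 0 <;> simp [wordEval, h, hu, hv]
  | ih2 a b ha hb =>
    show ρ ⁅wordEval a u v, wordEval b u v⁆ w = 0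
    rw [LieHom.map_lie, Ring.lie_def, LinearMap.sub_apply, Module.End.mul_apply,
      Module.End.mul_apply, ha, hb, map_zero, map_zero, sub_zero]

lemma wordEval_poly (a b x y : 𝔤) (m : FreeMagma (Fin 2)) :
    ∃ (N : ℕ) (c : ℕ → 𝔤), ∀ s : 𝔽,
      wordEval m (x + s • a) (y + s • b) = ∑ i ∈ Finset.range N, s ^ i • c i := by
  induction m with
  | ih1 i =>
    refine ⟨2, fun k => if k = 0 then (if i = 0 then x else y)
      else if k = 1 then (if i = 0 then a else b) else 0, ?_⟩
    intro s
    by_cases h : i = 0 <;>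
      simp [wordEval, h, Finset.sum_range_succ]
  | ih2 u w hu hw =>
    obtain ⟨N, c, hc⟩ := hu
    obtain ⟨M, d, hd⟩ := hw
    refine ⟨N + M, fun k => ∑ i ∈ Finset.range N, ∑ j ∈ Finset.range M,
      if i + j = k then ⁅c i, d j⁆ else 0, ?_⟩
    intro s
    show ⁅wordEval u (x + s • a) (y + s • b), wordEval w (x + s • a) (y + s • b)⁆ = _
    rw [hc s, hd s, sum_lie' _ _ _]
    simp_rw [lie_sum' _ _, smul_lie, lie_smul, smul_smul, ← pow_add]
    rw [eq_comm]
    calc ∑ k ∈ range (N + M), s ^ k • ∑ i ∈ range N, ∑ j ∈ range M,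
            (if i + j = k then ⁅c i, d j⁆ else 0)
        = ∑ k ∈ range (N + M), ∑ i ∈ range N, ∑ j ∈ range M,
            (if i + j = k then s ^ k • ⁅c i, d j⁆ else 0) := by
          simp_rw [Finset.smul_sum, smul_ite, smul_zero]
      _ = ∑ i ∈ range N, ∑ j ∈ range M, ∑ k ∈ range (N + M),
            (if i + j = k then s ^ k • ⁅c i, d j⁆ else 0) := by
          rw [Finset.sum_comm]
          exact Finset.sum_congr rfl fun i _ => Finset.sum_comm
      _ = ∑ i ∈ range N, ∑ j ∈ range M, s ^ (i + j) • ⁅c i, d j⁆ := by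
          refine Finset.sum_congr rfl fun i hi => Finset.sum_congr rfl fun j hj => ?_
          rw [Finset.sum_ite_eq, if_pos]
          rw [Finset.mem_range] at hi hj ⊢
          omega

end LKVaux

open LKVaux

theorem linearKernelVector_equivariant_of_two_generated {𝔽 : Type*} [Field 𝔽] [Infinite 𝔽]
    {𝔤 V : Type*} [LieRing 𝔤] [LieAlgebra 𝔽 𝔤] [Module.Finite 𝔽 𝔤]
    [AddCommGroup V] [Module 𝔽 V]
    (hgen : ∃ x₀ y₀ : 𝔤, LieSubalgebra.lieSpan 𝔽 𝔤 {x₀, y₀} = ⊤)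
    (ρ : 𝔤 →ₗ⁅𝔽⁆ Module.End 𝔽 V)
    (htriv : ∀ v : V, (∀ x : 𝔤, ρ x v = 0) → v = 0)
    (ψ : 𝔤 →ₗ[𝔽] V) (hψ : ∀ x : 𝔤, ρ x (ψ x) = 0) :
    ∀ x y : 𝔤, ψ ⁅x, y⁆ - ρ x (ψ y) = 0 := by
  classical
  obtain ⟨x₀, y₀, hgen⟩ := hgen
  -- polarization
  have hpol : ∀ u w : 𝔤, ρ u (ψ w) = - ρ w (ψ u) := by
    intro u w
    have h := hψ (u + w)
    simp only [map_add, LinearMap.add_apply, hψ u, hψ w, zero_add, add_zero] at h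
    exact eq_neg_of_add_eq_zero_right h
  set C : 𝔤 → 𝔤 → V := fun u w => ψ ⁅u, w⁆ - ρ u (ψ w) with hC
  have hCskew : ∀ u w, C w u = - C u w := by
    intro u w
    simp only [hC]
    rw [← lie_skew, map_neg, hpol w u]
    abel
  have hCx : ∀ u w, ρ u (C u w) = 0 := by
    intro u w
    simp only [hC, map_sub]
    rw [hpol u ⁅u, w⁆, LieHom.map_lie, Ring.lie_def, LinearMap.sub_apply,
      Module.End.mul_apply, Module.End.mul_apply, hψ u, map_zero, hpol w u]
    simp
  have hCy : ∀ u w, ρ w (C u w) = 0 := by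
    intro u w
    have h := hCx w u
    have h2 : C u w = - C w u := by rw [hCskew u w, neg_neg]
    rw [h2, map_neg, h, neg_zero]
  -- if the word values span, C vanishes
  have hCspan : ∀ u w : 𝔤,
      Submodule.span 𝔽 (Set.range fun m : FreeMagma (Fin 2) => wordEval m u w) = ⊤ →
      C u w = 0 := by
    intro u w hsp
    apply htriv
    intro z
    let L : 𝔤 →ₗ[𝔽] V := LinearMap.flip (ρ : 𝔤 →ₗ[𝔽] Module.End 𝔽 V) (C u w)
    have hle : Submodule.span 𝔽 (Set.range fun m : FreeMagma (Fin 2) => wordEval m u w) ≤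
        LinearMap.ker L := by
      refine Submodule.span_le.2 ?_
      rintro _ ⟨m, rfl⟩
      refine LinearMap.mem_ker.2 ?_
      show ρ (wordEval m u w) (C u w) = 0
      exact annih ρ (hCx u w) (hCy u w) m
    rw [hsp] at hle
    have hz := LinearMap.mem_ker.1 (hle (Submodule.mem_top (x := z)))
    exact hz
  -- extract a basis of word values at the generating pair
  have hsp0 : Submodule.span 𝔽
      (Set.range fun m : FreeMagma (Fin 2) => wordEval m x₀ y₀) = ⊤ :=
    span_wordEval_eq_top hgen
  obtain ⟨t, hts, htsp, htli⟩ :=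
    exists_linearIndependent 𝔽 (Set.range fun m : FreeMagma (Fin 2) => wordEval m x₀ y₀)
  rw [hsp0] at htsp
  have htfin : t.Finite := htli.setFinite
  haveI := htfin.fintype
  let bas0 : Module.Basis t 𝔽 𝔤 := Module.Basis.mk htli (by rw [Subtype.range_coe, htsp])
  set n := Module.finrank 𝔽 𝔤 with hn
  have hcard : Fintype.card t = n := (Module.finrank_eq_card_basis bas0).symm
  let eqv : Fin n ≃ t := (Fintype.equivFinOfCardEq hcard).symm
  let bas : Module.Basis (Fin n) 𝔽 𝔤 := bas0.reindex eqv.symm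
  have hbas : ∀ i : Fin n, ∃ m : FreeMagma (Fin 2), wordEval m x₀ y₀ = bas i := by
    intro i
    have : (bas i : 𝔤) ∈ t := by
      simp only [bas, Module.Basis.reindex_apply, Equiv.symm_symm, bas0, Module.Basis.mk_apply]
      exact (eqv i).2
    exact hts this
  choose mw hmw using hbas
  -- main genericity argument
  intro x y
  suffices hCxy : C x y = 0 by simpa [hC] using hCxy
  set a := x₀ - x with ha
  set b := y₀ - y with hb
  choose N c hcpoly using fun i : Fin n => wordEval_poly (𝔽 := 𝔽) a b x y (mw i)
  -- polynomial matrix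
  set P : Matrix (Fin n) (Fin n) (Polynomial 𝔽) :=
    fun j i => ∑ k ∈ Finset.range (N i), Polynomial.C ((bas.repr (c i k)) j) * X ^ k with hP
  have hPeval : ∀ s : 𝔽, P.map (Polynomial.eval s) =
      bas.toMatrix (fun i => wordEval (mw i) (x + s • a) (y + s • b)) := by
    intro s
    ext j i
    rw [Matrix.map_apply, Module.Basis.toMatrix_apply, hcpoly i s, hP]
    simp only [eval_finset_sum, eval_mul, eval_C, eval_pow, eval_X, map_sum, map_smul,
      Finsupp.coe_finset_sum, Finset.sum_apply, Finsupp.coe_smul, Pi.smul_apply,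
      smul_eq_mul]
    exact Finset.sum_congr rfl fun k _ => mul_comm _ _
  set q : Polynomial 𝔽 := P.det with hq
  have hq1 : q.eval 1 ≠ 0 := by
    have h1 : q.eval 1 = (P.map (Polynomial.eval 1)).det := RingHom.map_det (evalRingHom 1) P
    rw [h1, hPeval 1]
    have : (fun i => wordEval (mw i) (x + (1 : 𝔽) • a) (y + (1 : 𝔽) • b)) = ⇑bas := by
      funext i
      simp only [one_smul, ha, hb, add_sub_cancel]
      exact hmw i
    rw [this, Module.Basis.toMatrix_self]
    simp
  have hqne : q ≠ 0 := fun h => hq1 (by simp [h])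
  have hinf : {s : 𝔽 | q.eval s ≠ 0}.Infinite := by
    have hfin : {s : 𝔽 | q.IsRoot s}.Finite := q.finite_setOf_isRoot hqne
    have : {s : 𝔽 | q.eval s ≠ 0} = {s : 𝔽 | q.IsRoot s}ᶜ := by
      ext s; simp [Polynomial.IsRoot]
    rw [this]
    exact hfin.infinite_compl
  have hvanish : ∀ s : 𝔽, q.eval s ≠ 0 → C (x + s • a) (y + s • b) = 0 := by
    intro s hs
    apply hCspan
    have hdet : IsUnit (bas.det (fun i => wordEval (mw i) (x + s • a) (y + s • b))) := by
      have hdm : (P.map (eval s)).det = q.eval s := (RingHom.map_det (evalRingHom s) P).symm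
      rw [Module.Basis.det_apply, ← hPeval s, hdm]
      exact isUnit_iff_ne_zero.2 hs
    have hspan2 := ((Module.Basis.is_basis_iff_det bas).2 hdet).2
    refine top_unique ?_
    rw [← hspan2]
    refine Submodule.span_mono ?_
    rintro _ ⟨i, rfl⟩
    exact ⟨mw i, rfl⟩
  -- quadratic expansion of C along the line
  have hCexp : ∀ s : 𝔽, C (x + s • a) (y + s • b) =
      C x y + s • (C a y + C x b) + (s * s) • C a b := by
    intro s
    simp only [hC, lie_add, add_lie, lie_smul, smul_lie, map_add, map_smul,
      smul_smul, LinearMap.add_apply, LinearMap.smul_apply, smul_add, smul_sub]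
    module
  -- conclude via dual functionals
  have hdual : ∀ φ : Module.Dual 𝔽 V, φ (C x y) = 0 := by
    intro φ
    set r : Polynomial 𝔽 := Polynomial.C (φ (C x y)) +
      Polynomial.C (φ (C a y) + φ (C x b)) * X + Polynomial.C (φ (C a b)) * X ^ 2 with hr
    have hroot : {s : 𝔽 | q.eval s ≠ 0} ⊆ {s : 𝔽 | r.IsRoot s} := by
      intro s hs
      have h0 := hvanish s hs
      have h1 := hCexp s
      rw [h0] at h1
      have h2 := congrArg φ h1.symm
      simp only [map_add, map_smul, map_zero, smul_eq_mul] at h2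
      simp only [Set.mem_setOf_eq, Polynomial.IsRoot, hr, eval_add, eval_mul, eval_C,
        eval_pow, eval_X]
      linear_combination h2
    have hrzero : r = 0 := r.eq_zero_of_infinite_isRoot (hinf.mono hroot)
    have := congrArg (Polynomial.eval 0) hrzero
    simpa [hr] using this
  exact (Module.forall_dual_apply_eq_zero_iff 𝔽 (C x y)).1 hdual
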